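/- arXiv:2411.18094 — 2 statements merged into one kernel-verified Lean document; each statement's English description precedes it below -/
import Mathlib

section
/- If the domain of a write buffer μ is contained in the set of array addresses of a layout w (i.e., no buffered write targets a procedure address), then the committed memory commit(μ, w ∘ σ) of a buffer over the memory induced by layout w and store σ equals w ∘ σ' for some store σ' that agrees with σ on all procedure identifiers. -/
/-- The block of addresses an identifier occupies under a layout:
    arrays occupy contiguous ranges, procedures a single address. -/
def blockOf {ArId FnId : Type*} (size : ArId → ℕ) (w : ArId ⊕ FnId → ℕ) :
    ArId ⊕ FnId → Set ℕ
  | Sum.inl a => { p | ∃ k, k < size a ∧ p = w (Sum.inl a) + k }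
  | Sum.inr f => {w (Sum.inr f)}

/-- Layouts assign pairwise-disjoint address blocks to identifiers. -/
def GoodLayout {ArId FnId : Type*} (size : ArId → ℕ) (w : ArId ⊕ FnId → ℕ) : Prop :=
  ∀ i j, i ≠ j → Disjoint (blockOf size w i) (blockOf size w j)

/-- The memory induced by a layout `w` and a store (`arr`, `proc`). -/
noncomputable def inducedMem {ArId FnId Val Cmd : Type*}
    (size : ArId → ℕ) (w : ArId ⊕ FnId → ℕ)
    (arr : ArId → ℕ → Val) (proc : FnId → Cmd) (p : ℕ) : Option (Val ⊕ Cmd) :=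
  open Classical in
  if h : ∃ f : FnId, p = w (Sum.inr f) then some (Sum.inr (proc h.choose))
  else if h' : ∃ a : ArId, ∃ k : ℕ, k < size a ∧ p = w (Sum.inl a) + k then
    some (Sum.inl (arr h'.choose h'.choose_spec.choose))
  else none

/-- Committing a write buffer (of plain values) into a memory. -/
def commitO {Val Cmd : Type*} :
    List (ℕ × Val) → (ℕ → Option (Val ⊕ Cmd)) → (ℕ → Option (Val ⊕ Cmd))
  | [], m => m
  | (a, v) :: μ, m => Function.update (commitO μ m) a (some (Sum.inl v))

/-- If the domain of a write buffer is contained in the array addresses of layout `w`,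
    then the committed memory equals `w ∘ σ'` for some store `σ'` agreeing with `σ`
    on all procedure identifiers. -/
theorem commit_inducedMem {ArId FnId Val Cmd : Type*}
    (size : ArId → ℕ) (w : ArId ⊕ FnId → ℕ) (hw : GoodLayout size w)
    (arr : ArId → ℕ → Val) (proc : FnId → Cmd)
    (μ : List (ℕ × Val))
    (hdom : ∀ p ∈ μ.map Prod.fst, ∃ a : ArId, ∃ k : ℕ, k < size a ∧ p = w (Sum.inl a) + k) :
    ∃ arr' : ArId → ℕ → Val,
      commitO μ (inducedMem size w arr proc) = inducedMem size w arr' proc := by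
  induction μ generalizing arr with
  | nil => exact ⟨arr, rfl⟩
  | cons hd tl ih =>
    obtain ⟨p, v⟩ := hd
    obtain ⟨arr', harr'⟩ := ih arr (fun q hq => hdom q (by simpa using Or.inr hq))
    obtain ⟨a, k, hk, hp⟩ := hdom p (by simp)
    refine ⟨fun b j => if w (Sum.inl b) + j = p ∧ j < size b then v else arr' b j, ?_⟩
    funext q
    show Function.update (commitO tl (inducedMem size w arr proc)) p
        (some (Sum.inl v)) q = _
    rw [harr']
    by_cases hq : q = p
    · subst hq
      rw [Function.update_self]
      unfold inducedMem
      have hnf : ¬ ∃ f : FnId, q = w (Sum.inr f) := by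
        rintro ⟨f, hf⟩
        exact Set.disjoint_left.mp
          (hw (Sum.inl a) (Sum.inr f) (by simp)) ⟨k, hk, hp⟩ hf
      rw [dif_neg hnf, dif_pos ⟨a, k, hk, hp⟩]
      generalize_proofs h1 h2
      obtain ⟨hj, hpq⟩ := h2.choose_spec
      beta_reduce
      rw [if_pos ⟨hpq.symm, hj⟩]
    · rw [Function.update_of_ne hq]
      unfold inducedMem
      by_cases hf : ∃ f : FnId, q = w (Sum.inr f)
      · rw [dif_pos hf, dif_pos hf]
      · rw [dif_neg hf, dif_neg hf]
        by_cases ha : ∃ a : ArId, ∃ k : ℕ, k < size a ∧ q = w (Sum.inl a) + k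
        · rw [dif_pos ha, dif_pos ha]
          generalize_proofs h1
          beta_reduce
          rw [if_neg]
          rintro ⟨hh, -⟩
          exact hq (h1.choose_spec.2.trans hh)
        · rw [dif_neg ha, dif_neg ha]
end

section
/- Let a be an address, a an array identifier, σ a store, w a layout, and 0 ≤ i < size(a) with p = w(a) + i. Then updating the induced memory w ∘ σ at address p with value v equals the memory induced by w and the store σ updated at the array cell (a, i): (w ∘ σ)[p ↦ v] = w ∘ (σ[(a,i) ↦ v]). -/
/-- Updating the induced memory `w ∘ σ` at address `p = w(a)+i` (with `i < size a`)
    equals the memory induced by `w` and the store updated at the array cell `(a,i)`. -/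
theorem update_inducedMem {ArId FnId Val Cmd : Type*} [DecidableEq ArId]
    (size : ArId → ℕ) (w : ArId ⊕ FnId → ℕ) (hw : GoodLayout size w)
    (arr : ArId → ℕ → Val) (proc : FnId → Cmd)
    (a : ArId) (i : ℕ) (hi : i < size a) (v : Val) :
    Function.update (inducedMem size w arr proc) (w (Sum.inl a) + i) (some (Sum.inl v))
      = inducedMem size w (Function.update arr a (Function.update (arr a) i v)) proc := by
  classical
  funext q
  by_cases hq : q = w (Sum.inl a) + i
  · subst hq
    rw [Function.update_self]
    unfold inducedMem
    have hnf : ¬ ∃ f : FnId, w (Sum.inl a) + i = w (Sum.inr f) := by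
      rintro ⟨f, hf⟩
      have hmem : w (Sum.inl a) + i ∈ blockOf size w (Sum.inl a) := ⟨i, hi, rfl⟩
      have hmem' : w (Sum.inl a) + i ∈ blockOf size w (Sum.inr f) := hf
      exact Set.disjoint_left.mp (hw _ _ (by simp)) hmem hmem'
    rw [dif_neg hnf]
    have h' : ∃ a' : ArId, ∃ k : ℕ, k < size a' ∧
        w (Sum.inl a) + i = w (Sum.inl a') + k := ⟨a, i, hi, rfl⟩
    rw [dif_pos h']
    obtain ⟨hk, hp⟩ := h'.choose_spec.choose_spec
    revert hk hp
    generalize h'.choose_spec.choose = k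
    generalize h'.choose = b
    intro hk hp
    have hb : b = a := by
      by_contra hne
      have hmem : w (Sum.inl a) + i ∈ blockOf size w (Sum.inl b) := ⟨k, hk, hp⟩
      have hmem' : w (Sum.inl a) + i ∈ blockOf size w (Sum.inl a) := ⟨i, hi, rfl⟩
      exact Set.disjoint_left.mp (hw _ _ (by simp [hne])) hmem hmem'
    subst hb
    have hki : k = i := by omega
    subst hki
    simp
  · rw [Function.update_of_ne hq]
    unfold inducedMem
    by_cases hf : ∃ f : FnId, q = w (Sum.inr f)
    · rw [dif_pos hf, dif_pos hf]
    · rw [dif_neg hf, dif_neg hf]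
      by_cases h' : ∃ a' : ArId, ∃ k : ℕ, k < size a' ∧ q = w (Sum.inl a') + k
      · rw [dif_pos h', dif_pos h']
        obtain ⟨hk, hp⟩ := h'.choose_spec.choose_spec
        revert hk hp
        generalize h'.choose_spec.choose = k
        generalize h'.choose = b
        intro hk hp
        by_cases hb : b = a
        · subst hb
          have hki : k ≠ i := fun h => hq (by omega)
          simp [Function.update_of_ne hki]
        · simp [Function.update_of_ne hb]
      · rw [dif_neg h', dif_neg h']
end
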